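/- Let 0 < q < 1, 0 < a < b, and let f, g : [0,b] → ℝ be increasing with constants l_f, L_f, l_g, L_g > 0 satisfying a²/b² ≤ l_f/L_f, a²/b² ≤ l_g/L_g, and l_f ≤ (f(x)−f(y))/(x−y) ≤ L_f, l_g ≤ (g(x)−g(y))/(x−y) ≤ L_g for all distinct x,y ∈ [0,b]. Then I_q(fg;a,b) ≥ (1/(b−a))·I_q(f;a,b)·I_q(g;a,b) − (a·b·(b−a)/[3]_q)·L_f·L_g, where [3]_q = 1+q+q². -/

import Mathlib

open scoped BigOperators
open Set

/-- Summability of `h n * q ^ n` for bounded `h` and `0 < q < 1`. -/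
lemma aux_summable_of_bound (q : ℝ) (hq0 : 0 < q) (hq1 : q < 1) (h : ℕ → ℝ) (C : ℝ)
    (hb : ∀ n, |h n| ≤ C) : Summable fun n : ℕ => h n * q ^ n := by
  refine Summable.of_norm_bounded
    ((summable_geometric_of_lt_one hq0.le hq1).mul_left C) ?_
  intro n
  rw [Real.norm_eq_abs, abs_mul, abs_pow, abs_of_pos hq0]
  exact mul_le_mul_of_nonneg_right (hb n) (pow_nonneg hq0.le n)

/-- Weighted Chebyshev sum inequality for geometric weights and comonotone
bounded sequences. -/
lemma aux_cheb (q : ℝ) (hq0 : 0 < q) (hq1 : q < 1) (F G : ℕ → ℝ) (Cf Cg : ℝ)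
    (hCf : ∀ n, |F n| ≤ Cf) (hCg : ∀ n, |G n| ≤ Cg)
    (hmono : ∀ n m, 0 ≤ (F n - F m) * (G n - G m)) :
    (1 - q) * ((∑' n : ℕ, F n * q ^ n) * (∑' n : ℕ, G n * q ^ n)) ≤
      ∑' n : ℕ, F n * G n * q ^ n := by
  have Sq : Summable fun n : ℕ => q ^ n := summable_geometric_of_lt_one hq0.le hq1
  have hCf0 : 0 ≤ Cf := (abs_nonneg _).trans (hCf 0)
  have hCg0 : 0 ≤ Cg := (abs_nonneg _).trans (hCg 0)
  have SFs : Summable fun n : ℕ => F n * q ^ n := aux_summable_of_bound q hq0 hq1 F Cf hCf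
  have SGs : Summable fun n : ℕ => G n * q ^ n := aux_summable_of_bound q hq0 hq1 G Cg hCg
  have SFGs : Summable fun n : ℕ => F n * G n * q ^ n := by
    refine aux_summable_of_bound q hq0 hq1 (fun n => F n * G n) (Cf * Cg) fun n => ?_
    rw [abs_mul]
    exact mul_le_mul (hCf n) (hCg n) (abs_nonneg _) hCf0
  set SF := ∑' n : ℕ, F n * q ^ n with hSF
  set SG := ∑' n : ℕ, G n * q ^ n with hSG
  set SFG := ∑' n : ℕ, F n * G n * q ^ n with hSFG
  set Q := ∑' n : ℕ, q ^ n with hQdef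
  have hQ : Q = (1 - q)⁻¹ := tsum_geometric_of_lt_one hq0.le hq1
  have key : ∀ n : ℕ, (∑' m : ℕ, q ^ n * q ^ m * ((F n - F m) * (G n - G m))) =
      F n * G n * q ^ n * Q - F n * q ^ n * SG - G n * q ^ n * SF + q ^ n * SFG := by
    intro n
    have e : ∀ m : ℕ, q ^ n * q ^ m * ((F n - F m) * (G n - G m)) =
        F n * G n * q ^ n * q ^ m - F n * q ^ n * (G m * q ^ m)
          - G n * q ^ n * (F m * q ^ m) + q ^ n * (F m * G m * q ^ m) := by
      intro m; ring
    rw [tsum_congr e,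
      Summable.tsum_add (((Sq.mul_left _).sub (SGs.mul_left _)).sub (SFs.mul_left _))
        (SFGs.mul_left _),
      Summable.tsum_sub ((Sq.mul_left _).sub (SGs.mul_left _)) (SFs.mul_left _),
      Summable.tsum_sub (Sq.mul_left _) (SGs.mul_left _),
      tsum_mul_left, tsum_mul_left, tsum_mul_left, tsum_mul_left]
  have T0 : 0 ≤ ∑' n : ℕ,
      (F n * G n * q ^ n * Q - F n * q ^ n * SG - G n * q ^ n * SF + q ^ n * SFG) := by
    rw [tsum_congr fun n => (key n).symm]
    refine tsum_nonneg fun n => tsum_nonneg fun m => ?_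
    exact mul_nonneg (mul_nonneg (pow_nonneg hq0.le n) (pow_nonneg hq0.le m)) (hmono n m)
  have expand : (∑' n : ℕ,
      (F n * G n * q ^ n * Q - F n * q ^ n * SG - G n * q ^ n * SF + q ^ n * SFG)) =
      SFG * Q - SF * SG - SG * SF + Q * SFG := by
    rw [Summable.tsum_add (((SFGs.mul_right _).sub (SFs.mul_right _)).sub (SGs.mul_right _))
        (Sq.mul_right _),
      Summable.tsum_sub ((SFGs.mul_right _).sub (SFs.mul_right _)) (SGs.mul_right _),
      Summable.tsum_sub (SFGs.mul_right _) (SFs.mul_right _),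
      tsum_mul_right, tsum_mul_right, tsum_mul_right, tsum_mul_right]
  rw [expand] at T0
  have h1q : (0:ℝ) < 1 - q := by linarith
  have hprod : SF * SG ≤ Q * SFG := by linarith
  calc (1 - q) * (SF * SG) ≤ (1 - q) * (Q * SFG) :=
        mul_le_mul_of_nonneg_left hprod h1q.le
    _ = ((1 - q) * (1 - q)⁻¹) * SFG := by rw [hQ]; ring
    _ = SFG := by rw [mul_inv_cancel₀ h1q.ne', one_mul]

set_option maxHeartbeats 1000000 in
/-- Chebyshev-type bound for `I_q(·;a,b)` with correction term
`a·b·(b−a)·L_f·L_g/[3]_q`. -/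
theorem q_chebyshev_correction_a (q a b lf Lf lg Lg : ℝ) (f g : ℝ → ℝ)
    (hq0 : 0 < q) (hq1 : q < 1) (ha : 0 < a) (hab : a < b)
    (hlf : 0 < lf) (hLf : 0 < Lf) (hlg : 0 < lg) (hLg : 0 < Lg)
    (hrf : a ^ 2 / b ^ 2 ≤ lf / Lf) (hrg : a ^ 2 / b ^ 2 ≤ lg / Lg)
    (hfmono : MonotoneOn f (Icc 0 b)) (hgmono : MonotoneOn g (Icc 0 b))
    (hslopef : ∀ x ∈ Icc (0:ℝ) b, ∀ y ∈ Icc (0:ℝ) b, x ≠ y →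
      lf ≤ (f x - f y) / (x - y) ∧ (f x - f y) / (x - y) ≤ Lf)
    (hslopeg : ∀ x ∈ Icc (0:ℝ) b, ∀ y ∈ Icc (0:ℝ) b, x ≠ y →
      lg ≤ (g x - g y) / (x - y) ∧ (g x - g y) / (x - y) ≤ Lg) :
    (b * (1 - q) * ∑' n : ℕ, f (b * q ^ n) * g (b * q ^ n) * q ^ n) -
        (a * (1 - q) * ∑' n : ℕ, f (a * q ^ n) * g (a * q ^ n) * q ^ n) ≥
      (1 / (b - a)) *
          ((b * (1 - q) * ∑' n : ℕ, f (b * q ^ n) * q ^ n) -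
            (a * (1 - q) * ∑' n : ℕ, f (a * q ^ n) * q ^ n)) *
          ((b * (1 - q) * ∑' n : ℕ, g (b * q ^ n) * q ^ n) -
            (a * (1 - q) * ∑' n : ℕ, g (a * q ^ n) * q ^ n)) -
        (a * b * (b - a) / (1 + q + q ^ 2)) * Lf * Lg := by
  have hb0 : (0:ℝ) < b := ha.trans hab
  have hba : (0:ℝ) < b - a := sub_pos.2 hab
  have h1q : (0:ℝ) < 1 - q := by linarith
  -- membership of the grid points
  have hqn0 : ∀ n : ℕ, 0 < q ^ n := fun n => pow_pos hq0 n
  have hqn1 : ∀ n : ℕ, q ^ n ≤ 1 := fun n => pow_le_one₀ hq0.le hq1.le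
  have hmemb : ∀ n : ℕ, b * q ^ n ∈ Icc (0:ℝ) b := by
    intro n
    refine ⟨(mul_pos hb0 (hqn0 n)).le, ?_⟩
    calc b * q ^ n ≤ b * 1 := mul_le_mul_of_nonneg_left (hqn1 n) hb0.le
      _ = b := mul_one b
  have hmema : ∀ n : ℕ, a * q ^ n ∈ Icc (0:ℝ) b := by
    intro n
    refine ⟨(mul_pos ha (hqn0 n)).le, ?_⟩
    calc a * q ^ n ≤ a * 1 := mul_le_mul_of_nonneg_left (hqn1 n) ha.le
      _ = a := mul_one a
      _ ≤ b := hab.le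
  -- bounds on f, g on [0,b]
  have h0mem : (0:ℝ) ∈ Icc (0:ℝ) b := ⟨le_refl 0, hb0.le⟩
  have hbmem : b ∈ Icc (0:ℝ) b := ⟨hb0.le, le_refl b⟩
  set Mf := max |f 0| |f b| with hMfdef
  set Mg := max |g 0| |g b| with hMgdef
  have hMf : ∀ x ∈ Icc (0:ℝ) b, |f x| ≤ Mf := by
    intro x hx
    rw [abs_le]
    constructor
    · have := hfmono h0mem hx hx.1
      have h2 : -|f 0| ≤ f 0 := neg_abs_le _
      have h3 : |f 0| ≤ Mf := le_max_left _ _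
      linarith
    · have := hfmono hx hbmem hx.2
      have h2 : f b ≤ |f b| := le_abs_self _
      have h3 : |f b| ≤ Mf := le_max_right _ _
      linarith
  have hMg : ∀ x ∈ Icc (0:ℝ) b, |g x| ≤ Mg := by
    intro x hx
    rw [abs_le]
    constructor
    · have := hgmono h0mem hx hx.1
      have h2 : -|g 0| ≤ g 0 := neg_abs_le _
      have h3 : |g 0| ≤ Mg := le_max_left _ _
      linarith
    · have := hgmono hx hbmem hx.2
      have h2 : g b ≤ |g b| := le_abs_self _
      have h3 : |g b| ≤ Mg := le_max_right _ _
      linarith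
  have hMf0 : 0 ≤ Mf := (abs_nonneg _).trans (hMf 0 h0mem)
  have hMg0 : 0 ≤ Mg := (abs_nonneg _).trans (hMg 0 h0mem)
  -- slope facts in difference form
  have slopef : ∀ x ∈ Icc (0:ℝ) b, ∀ y ∈ Icc (0:ℝ) b, y < x →
      lf * (x - y) ≤ f x - f y ∧ f x - f y ≤ Lf * (x - y) := by
    intro x hx y hy hyx
    obtain ⟨h1, h2⟩ := hslopef x hx y hy (ne_of_gt hyx)
    have hd : 0 < x - y := sub_pos.2 hyx
    constructor
    · rw [le_div_iff₀ hd] at h1; linarith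
    · rw [div_le_iff₀ hd] at h2; linarith
  have slopeg : ∀ x ∈ Icc (0:ℝ) b, ∀ y ∈ Icc (0:ℝ) b, y < x →
      lg * (x - y) ≤ g x - g y ∧ g x - g y ≤ Lg * (x - y) := by
    intro x hx y hy hyx
    obtain ⟨h1, h2⟩ := hslopeg x hx y hy (ne_of_gt hyx)
    have hd : 0 < x - y := sub_pos.2 hyx
    constructor
    · rw [le_div_iff₀ hd] at h1; linarith
    · rw [div_le_iff₀ hd] at h2; linarith
  -- the ratio conditions
  have hkeyf : Lf * a ^ 2 ≤ lf * b ^ 2 := by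
    rw [div_le_div_iff₀ (pow_pos hb0 2) hLf] at hrf
    linarith
  have hkeyg : Lg * a ^ 2 ≤ lg * b ^ 2 := by
    rw [div_le_div_iff₀ (pow_pos hb0 2) hLg] at hrg
    linarith
  -- main sequences
  set F : ℕ → ℝ := fun n => b * f (b * q ^ n) - a * f (a * q ^ n) with hFdef
  set G : ℕ → ℝ := fun n => b * g (b * q ^ n) - a * g (a * q ^ n) with hGdef
  -- summability of the basic series
  have Sq : Summable fun n : ℕ => q ^ n := summable_geometric_of_lt_one hq0.le hq1
  have Sfb : Summable fun n : ℕ => f (b * q ^ n) * q ^ n :=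
    aux_summable_of_bound q hq0 hq1 _ Mf fun n => hMf _ (hmemb n)
  have Sfa : Summable fun n : ℕ => f (a * q ^ n) * q ^ n :=
    aux_summable_of_bound q hq0 hq1 _ Mf fun n => hMf _ (hmema n)
  have Sgb : Summable fun n : ℕ => g (b * q ^ n) * q ^ n :=
    aux_summable_of_bound q hq0 hq1 _ Mg fun n => hMg _ (hmemb n)
  have Sga : Summable fun n : ℕ => g (a * q ^ n) * q ^ n :=
    aux_summable_of_bound q hq0 hq1 _ Mg fun n => hMg _ (hmema n)
  have Sfgb : Summable fun n : ℕ => f (b * q ^ n) * g (b * q ^ n) * q ^ n := by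
    refine aux_summable_of_bound q hq0 hq1 _ (Mf * Mg) fun n => ?_
    rw [abs_mul]
    exact mul_le_mul (hMf _ (hmemb n)) (hMg _ (hmemb n)) (abs_nonneg _) hMf0
  have Sfga : Summable fun n : ℕ => f (a * q ^ n) * g (a * q ^ n) * q ^ n := by
    refine aux_summable_of_bound q hq0 hq1 _ (Mf * Mg) fun n => ?_
    rw [abs_mul]
    exact mul_le_mul (hMf _ (hmema n)) (hMg _ (hmema n)) (abs_nonneg _) hMf0
  -- bounds for F and G
  have hFb : ∀ n, |F n| ≤ b * Mf + a * Mf := by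
    intro n
    have h1 : |b * f (b * q ^ n)| ≤ b * Mf := by
      rw [abs_mul, abs_of_pos hb0]
      exact mul_le_mul_of_nonneg_left (hMf _ (hmemb n)) hb0.le
    have h2 : |a * f (a * q ^ n)| ≤ a * Mf := by
      rw [abs_mul, abs_of_pos ha]
      exact mul_le_mul_of_nonneg_left (hMf _ (hmema n)) ha.le
    calc |F n| ≤ |b * f (b * q ^ n)| + |a * f (a * q ^ n)| := abs_sub _ _
      _ ≤ b * Mf + a * Mf := add_le_add h1 h2
  have hGb : ∀ n, |G n| ≤ b * Mg + a * Mg := by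
    intro n
    have h1 : |b * g (b * q ^ n)| ≤ b * Mg := by
      rw [abs_mul, abs_of_pos hb0]
      exact mul_le_mul_of_nonneg_left (hMg _ (hmemb n)) hb0.le
    have h2 : |a * g (a * q ^ n)| ≤ a * Mg := by
      rw [abs_mul, abs_of_pos ha]
      exact mul_le_mul_of_nonneg_left (hMg _ (hmema n)) ha.le
    calc |G n| ≤ |b * g (b * q ^ n)| + |a * g (a * q ^ n)| := abs_sub _ _
      _ ≤ b * Mg + a * Mg := add_le_add h1 h2
  -- comonotonicity of F and G
  have hFanti : ∀ n m : ℕ, n ≤ m → F m ≤ F n := by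
    intro n m hnm
    rcases hnm.lt_or_eq with h | h
    · have hq' : q ^ m < q ^ n := pow_lt_pow_right_of_lt_one₀ hq0 hq1 h
      have hbb : b * q ^ m < b * q ^ n := by
        exact mul_lt_mul_of_pos_left hq' hb0
      have haa : a * q ^ m < a * q ^ n := by
        exact mul_lt_mul_of_pos_left hq' ha
      obtain ⟨e1, _⟩ := slopef _ (hmemb n) _ (hmemb m) hbb
      obtain ⟨_, e2⟩ := slopef _ (hmema n) _ (hmema m) haa
      have c1 : b * (lf * (b * q ^ n - b * q ^ m)) ≤ b * (f (b * q ^ n) - f (b * q ^ m)) :=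
        mul_le_mul_of_nonneg_left e1 hb0.le
      have c2 : a * (f (a * q ^ n) - f (a * q ^ m)) ≤ a * (Lf * (a * q ^ n - a * q ^ m)) :=
        mul_le_mul_of_nonneg_left e2 ha.le
      have c3 : 0 ≤ (lf * b ^ 2 - Lf * a ^ 2) * (q ^ n - q ^ m) :=
        mul_nonneg (by linarith) (by linarith)
      simp only [hFdef]
      nlinarith [c1, c2, c3]
    · subst h; exact le_refl _
  have hGanti : ∀ n m : ℕ, n ≤ m → G m ≤ G n := by
    intro n m hnm
    rcases hnm.lt_or_eq with h | h
    · have hq' : q ^ m < q ^ n := pow_lt_pow_right_of_lt_one₀ hq0 hq1 h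
      have hbb : b * q ^ m < b * q ^ n := mul_lt_mul_of_pos_left hq' hb0
      have haa : a * q ^ m < a * q ^ n := mul_lt_mul_of_pos_left hq' ha
      obtain ⟨e1, _⟩ := slopeg _ (hmemb n) _ (hmemb m) hbb
      obtain ⟨_, e2⟩ := slopeg _ (hmema n) _ (hmema m) haa
      have c1 : b * (lg * (b * q ^ n - b * q ^ m)) ≤ b * (g (b * q ^ n) - g (b * q ^ m)) :=
        mul_le_mul_of_nonneg_left e1 hb0.le
      have c2 : a * (g (a * q ^ n) - g (a * q ^ m)) ≤ a * (Lg * (a * q ^ n - a * q ^ m)) :=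
        mul_le_mul_of_nonneg_left e2 ha.le
      have c3 : 0 ≤ (lg * b ^ 2 - Lg * a ^ 2) * (q ^ n - q ^ m) :=
        mul_nonneg (by linarith) (by linarith)
      simp only [hGdef]
      nlinarith [c1, c2, c3]
    · subst h; exact le_refl _
  have hmono : ∀ n m : ℕ, 0 ≤ (F n - F m) * (G n - G m) := by
    intro n m
    rcases le_total n m with h | h
    · exact mul_nonneg (sub_nonneg.2 (hFanti n m h)) (sub_nonneg.2 (hGanti n m h))
    · have h2 : (F n - F m) * (G n - G m) = (F m - F n) * (G m - G n) := by ring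
      rw [h2]
      exact mul_nonneg (sub_nonneg.2 (hFanti m n h)) (sub_nonneg.2 (hGanti m n h))
  -- the Chebyshev inequality
  have hcheb := aux_cheb q hq0 hq1 F G (b * Mf + a * Mf) (b * Mg + a * Mg) hFb hGb hmono
  -- difference bounds
  have hDf : ∀ n : ℕ, 0 ≤ f (b * q ^ n) - f (a * q ^ n) ∧
      f (b * q ^ n) - f (a * q ^ n) ≤ Lf * (b - a) * q ^ n := by
    intro n
    have hlt : a * q ^ n < b * q ^ n := by
      exact mul_lt_mul_of_pos_right hab (hqn0 n)
    obtain ⟨e1, e2⟩ := slopef _ (hmemb n) _ (hmema n) hlt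
    constructor
    · nlinarith [mul_pos (mul_pos hlf hba) (hqn0 n)]
    · nlinarith [e2]
  have hDg : ∀ n : ℕ, 0 ≤ g (b * q ^ n) - g (a * q ^ n) ∧
      g (b * q ^ n) - g (a * q ^ n) ≤ Lg * (b - a) * q ^ n := by
    intro n
    have hlt : a * q ^ n < b * q ^ n := mul_lt_mul_of_pos_right hab (hqn0 n)
    obtain ⟨e1, e2⟩ := slopeg _ (hmemb n) _ (hmema n) hlt
    constructor
    · nlinarith [mul_pos (mul_pos hlg hba) (hqn0 n)]
    · nlinarith [e2]
  -- the D series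
  set D : ℕ → ℝ := fun n =>
    (f (b * q ^ n) - f (a * q ^ n)) * (g (b * q ^ n) - g (a * q ^ n)) with hDdef
  have hq3 : (0:ℝ) ≤ q ^ 3 := (pow_pos hq0 3).le
  have hq31 : q ^ 3 < 1 := pow_lt_one₀ hq0.le hq1 (by norm_num)
  have Sq3 : Summable fun n : ℕ => (q ^ 3) ^ n := summable_geometric_of_lt_one hq3 hq31
  have hDle : ∀ n : ℕ, D n * q ^ n ≤ Lf * Lg * (b - a) ^ 2 * (q ^ 3) ^ n := by
    intro n
    obtain ⟨f0, f1⟩ := hDf n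
    obtain ⟨g0, g1⟩ := hDg n
    have h1 : D n ≤ (Lf * (b - a) * q ^ n) * (Lg * (b - a) * q ^ n) :=
      mul_le_mul f1 g1 g0 (by positivity)
    have h2 : D n * q ^ n ≤ (Lf * (b - a) * q ^ n) * (Lg * (b - a) * q ^ n) * q ^ n :=
      mul_le_mul_of_nonneg_right h1 (hqn0 n).le
    calc D n * q ^ n ≤ (Lf * (b - a) * q ^ n) * (Lg * (b - a) * q ^ n) * q ^ n := h2
      _ = Lf * Lg * (b - a) ^ 2 * (q ^ 3) ^ n := by ring
  have hD0 : ∀ n : ℕ, 0 ≤ D n * q ^ n := by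
    intro n
    obtain ⟨f0, _⟩ := hDf n
    obtain ⟨g0, _⟩ := hDg n
    exact mul_nonneg (mul_nonneg f0 g0) (hqn0 n).le
  have SDs : Summable fun n : ℕ => D n * q ^ n :=
    Summable.of_nonneg_of_le hD0 hDle (Sq3.mul_left _)
  have hSD : (∑' n : ℕ, D n * q ^ n) ≤ Lf * Lg * (b - a) ^ 2 * (1 - q ^ 3)⁻¹ := by
    calc (∑' n : ℕ, D n * q ^ n) ≤ ∑' n : ℕ, Lf * Lg * (b - a) ^ 2 * (q ^ 3) ^ n :=
          Summable.tsum_le_tsum hDle SDs (Sq3.mul_left _)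
      _ = Lf * Lg * (b - a) ^ 2 * (1 - q ^ 3)⁻¹ := by
          rw [tsum_mul_left, tsum_geometric_of_lt_one hq3 hq31]
  -- summability of F, G and FG series
  have SFs : Summable fun n : ℕ => F n * q ^ n :=
    aux_summable_of_bound q hq0 hq1 F _ hFb
  have SGs : Summable fun n : ℕ => G n * q ^ n :=
    aux_summable_of_bound q hq0 hq1 G _ hGb
  have SFGs : Summable fun n : ℕ => F n * G n * q ^ n := by
    refine aux_summable_of_bound q hq0 hq1 (fun n => F n * G n) ((b * Mf + a * Mf) * (b * Mg + a * Mg)) fun n => ?_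
    rw [abs_mul]
    exact mul_le_mul (hFb n) (hGb n) (abs_nonneg _) ((abs_nonneg _).trans (hFb 0))
  -- express the statement's sums through SF, SG
  have eqF : b * (1 - q) * (∑' n : ℕ, f (b * q ^ n) * q ^ n) -
      a * (1 - q) * (∑' n : ℕ, f (a * q ^ n) * q ^ n) = (1 - q) * ∑' n : ℕ, F n * q ^ n := by
    have e : ∀ n : ℕ, F n * q ^ n =
        b * (f (b * q ^ n) * q ^ n) - a * (f (a * q ^ n) * q ^ n) := by
      intro n; simp only [hFdef]; ring
    rw [tsum_congr e, Summable.tsum_sub (Sfb.mul_left b) (Sfa.mul_left a), tsum_mul_left, tsum_mul_left]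
    ring
  have eqG : b * (1 - q) * (∑' n : ℕ, g (b * q ^ n) * q ^ n) -
      a * (1 - q) * (∑' n : ℕ, g (a * q ^ n) * q ^ n) = (1 - q) * ∑' n : ℕ, G n * q ^ n := by
    have e : ∀ n : ℕ, G n * q ^ n =
        b * (g (b * q ^ n) * q ^ n) - a * (g (a * q ^ n) * q ^ n) := by
      intro n; simp only [hGdef]; ring
    rw [tsum_congr e, Summable.tsum_sub (Sgb.mul_left b) (Sga.mul_left a), tsum_mul_left, tsum_mul_left]
    ring
  -- key identity: (b-a) * H n = F n * G n - a*b*D n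
  have eqH : (b - a) * ((b * (1 - q) * ∑' n : ℕ, f (b * q ^ n) * g (b * q ^ n) * q ^ n) -
      (a * (1 - q) * ∑' n : ℕ, f (a * q ^ n) * g (a * q ^ n) * q ^ n)) =
      (1 - q) * ((∑' n : ℕ, F n * G n * q ^ n) - a * b * ∑' n : ℕ, D n * q ^ n) := by
    have e : ∀ n : ℕ, F n * G n * q ^ n - a * b * (D n * q ^ n) =
        (b - a) * (b * (f (b * q ^ n) * g (b * q ^ n) * q ^ n)
          - a * (f (a * q ^ n) * g (a * q ^ n) * q ^ n)) := by
      intro n; simp only [hFdef, hGdef, hDdef]; ring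
    have e2 : (∑' n : ℕ, F n * G n * q ^ n) - a * b * (∑' n : ℕ, D n * q ^ n) =
        (b - a) * ((∑' n : ℕ, f (b * q ^ n) * g (b * q ^ n) * q ^ n) * b -
          (∑' n : ℕ, f (a * q ^ n) * g (a * q ^ n) * q ^ n) * a) := by
      rw [← tsum_mul_left (a := a * b), ← Summable.tsum_sub SFGs (SDs.mul_left (a * b)),
        tsum_congr e, tsum_mul_left, Summable.tsum_sub (Sfgb.mul_left b) (Sfga.mul_left a),
        tsum_mul_left, tsum_mul_left]
      ring
    rw [e2]; ring
  -- final assembly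
  set SF := ∑' n : ℕ, F n * q ^ n
  set SG := ∑' n : ℕ, G n * q ^ n
  set SFG := ∑' n : ℕ, F n * G n * q ^ n
  set SD := ∑' n : ℕ, D n * q ^ n
  rw [ge_iff_le, eqF, eqG]
  -- goal: 1/(b-a) * ((1-q)*SF) * ((1-q)*SG) - a*b*(b-a)/(1+q+q^2)*Lf*Lg ≤ LHS
  have h3q : (0:ℝ) < 1 + q + q ^ 2 := by positivity
  have hq3fac : (1:ℝ) - q ^ 3 = (1 - q) * (1 + q + q ^ 2) := by ring
  have hSD' : (1 - q) * SD ≤ Lf * Lg * (b - a) ^ 2 / (1 + q + q ^ 2) := by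
    have := mul_le_mul_of_nonneg_left hSD h1q.le
    calc (1 - q) * SD ≤ (1 - q) * (Lf * Lg * (b - a) ^ 2 * (1 - q ^ 3)⁻¹) := this
      _ = Lf * Lg * (b - a) ^ 2 / (1 + q + q ^ 2) := by
          rw [hq3fac, mul_inv]
          field_simp
  have hmul : ∀ X Y : ℝ, (b - a) * X ≤ (b - a) * Y → X ≤ Y := by
    intro X Y h
    exact le_of_mul_le_mul_left h hba
  apply hmul
  rw [eqH]
  have expand_rhs : (b - a) * (1 / (b - a) * ((1 - q) * SF) * ((1 - q) * SG) -
      a * b * (b - a) / (1 + q + q ^ 2) * Lf * Lg) =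
      ((1 - q) * SF) * ((1 - q) * SG) - (b - a) * (a * b * (b - a) / (1 + q + q ^ 2) * Lf * Lg) := by
    field_simp
  rw [expand_rhs]
  have key1 : ((1 - q) * SF) * ((1 - q) * SG) ≤ (1 - q) * SFG := by
    have := mul_le_mul_of_nonneg_left hcheb h1q.le
    calc ((1 - q) * SF) * ((1 - q) * SG) = (1 - q) * ((1 - q) * (SF * SG)) := by ring
      _ ≤ (1 - q) * SFG := this
  have key2 : (1 - q) * (a * b * SD) ≤ (b - a) * (a * b * (b - a) / (1 + q + q ^ 2) * Lf * Lg) := by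
    have hab0 : (0:ℝ) ≤ a * b := (mul_pos ha hb0).le
    have := mul_le_mul_of_nonneg_left hSD' hab0
    calc (1 - q) * (a * b * SD) = a * b * ((1 - q) * SD) := by ring
      _ ≤ a * b * (Lf * Lg * (b - a) ^ 2 / (1 + q + q ^ 2)) := this
      _ = (b - a) * (a * b * (b - a) / (1 + q + q ^ 2) * Lf * Lg) := by
          field_simp
  calc ((1 - q) * SF) * ((1 - q) * SG) - (b - a) * (a * b * (b - a) / (1 + q + q ^ 2) * Lf * Lg)
      ≤ (1 - q) * SFG - (1 - q) * (a * b * SD) := by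
        have := key1
        have := key2
        linarith
    _ = (1 - q) * (SFG - a * b * SD) := by ring
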